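/- (Averaging of the demodulated measurement recovers the gradient.) Let Q : ℝⁿ → ℝ be continuously differentiable with ℓ-Lipschitz gradient (ℓ > 0). Then for every θ̂ ∈ ℝⁿ, every a > 0 and every index i ∈ {1, …, n}: |(1/T)·∫₀ᵀ Q(θ̂ + S(t))·(2/a)·sin(ω_i t) dt − ∂Q/∂θ_i(θ̂)| ≤ n·ℓ·a. In particular, the T-average of the demodulated measurement equals ∇Q(θ̂) up to an error of order O(a). -/

import Mathlib

open scoped RealInnerProductSpace
open Set Filter

/-- The dither (perturbation) signal `S(t) = a·(sin(ω₁t), …, sin(ωₙt))`. -/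
noncomputable def dither {n : ℕ} (ω : Fin n → ℝ) (a t : ℝ) : EuclideanSpace ℝ (Fin n) :=
  WithLp.toLp 2 (fun i => a * Real.sin (ω i * t))

/-- The demodulation signal `M(t) = (2/a)·(sin(ω₁t), …, sin(ωₙt))`. -/
noncomputable def demod {n : ℕ} (ω : Fin n → ℝ) (a t : ℝ) : EuclideanSpace ℝ (Fin n) :=
  WithLp.toLp 2 (fun i => (2 / a) * Real.sin (ω i * t))

lemma integral_cos_zero' {c T : ℝ} (hc : c ≠ 0) (k : ℤ) (hk : c * T = (k : ℝ) * (2 * Real.pi)) :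
    ∫ t in (0:ℝ)..T, Real.cos (c * t) = 0 := by
  rw [intervalIntegral.integral_comp_mul_left Real.cos hc]
  have h2 : (k : ℝ) * (2 * Real.pi) = ((2 * k : ℤ) : ℝ) * Real.pi := by push_cast; ring
  rw [integral_cos, mul_zero, hk, h2, Real.sin_int_mul_pi, Real.sin_zero]
  simp

lemma integral_sin_zero' {c T : ℝ} (hc : c ≠ 0) (k : ℤ) (hk : c * T = (k : ℝ) * (2 * Real.pi)) :
    ∫ t in (0:ℝ)..T, Real.sin (c * t) = 0 := by
  rw [intervalIntegral.integral_comp_mul_left Real.sin hc]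
  rw [integral_sin, mul_zero, hk, Real.cos_int_mul_two_pi, Real.cos_zero]
  simp

lemma taylor_bound' {n : ℕ} (Q : EuclideanSpace ℝ (Fin n) → ℝ) (ℓ : ℝ)
    (hQ : ContDiff ℝ 1 Q)
    (hQlip : ∀ x y, ‖gradient Q x - gradient Q y‖ ≤ ℓ * ‖x - y‖)
    (x h : EuclideanSpace ℝ (Fin n)) :
    |Q (x + h) - Q x - ⟪gradient Q x, h⟫| ≤ ℓ / 2 * ‖h‖ ^ 2 := by
  have hd : Differentiable ℝ Q := hQ.differentiable one_ne_zero
  have hgc : Continuous (gradient Q) := by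
    have : Continuous fun y => (InnerProductSpace.toDual ℝ (EuclideanSpace ℝ (Fin n))).symm
        (fderiv ℝ Q y) :=
      (InnerProductSpace.toDual ℝ _).symm.continuous.comp (hQ.continuous_fderiv one_ne_zero)
    exact this
  have hline : ∀ t : ℝ, Continuous fun s : ℝ => x + s • h := fun t => by continuity
  have hde : ∀ t : ℝ, HasDerivAt (fun s : ℝ => Q (x + s • h)) ⟪gradient Q (x + t • h), h⟫ t := by
    intro t
    have hl : HasDerivAt (fun s : ℝ => x + s • h) h t := by
      simpa using ((hasDerivAt_id t).smul_const h).const_add x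
    have hfd := (hd (x + t • h)).hasGradientAt.hasFDerivAt
    have := hfd.comp_hasDerivAt t hl
    simpa [InnerProductSpace.toDual_apply_apply, Function.comp_def] using this
  have hcont : Continuous fun t : ℝ => ⟪gradient Q (x + t • h), h⟫ :=
    Continuous.inner (hgc.comp (hline 0)) continuous_const
  have hFTC : ∫ t in (0:ℝ)..1, ⟪gradient Q (x + t • h), h⟫ = Q (x + h) - Q x := by
    simpa using intervalIntegral.integral_eq_sub_of_hasDerivAt (f := fun s : ℝ => Q (x + s • h))
      (fun t _ => hde t) (hcont.intervalIntegrable 0 1)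
  have hcont2 : Continuous fun t : ℝ => ⟪gradient Q (x + t • h) - gradient Q x, h⟫ :=
    Continuous.inner ((hgc.comp (hline 0)).sub continuous_const) continuous_const
  have hsplit : Q (x + h) - Q x - ⟪gradient Q x, h⟫
      = ∫ t in (0:ℝ)..1, ⟪gradient Q (x + t • h) - gradient Q x, h⟫ := by
    have e : ∀ t ∈ Set.uIcc (0:ℝ) 1, (fun t : ℝ => ⟪gradient Q (x + t • h) - gradient Q x, h⟫) t
        = ⟪gradient Q (x + t • h), h⟫ - ⟪gradient Q x, h⟫ := fun t _ => inner_sub_left _ _ _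
    rw [intervalIntegral.integral_congr e,
      intervalIntegral.integral_sub (hcont.intervalIntegrable 0 1)
        (intervalIntegrable_const), hFTC]
    simp
  rw [hsplit]
  have hb : ∀ t ∈ Set.Icc (0:ℝ) 1,
      |⟪gradient Q (x + t • h) - gradient Q x, h⟫| ≤ ℓ * ‖h‖ ^ 2 * t := by
    intro t ht
    calc |⟪gradient Q (x + t • h) - gradient Q x, h⟫|
        ≤ ‖gradient Q (x + t • h) - gradient Q x‖ * ‖h‖ := abs_real_inner_le_norm _ _
      _ ≤ (ℓ * ‖x + t • h - x‖) * ‖h‖ := by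
          gcongr; exact hQlip _ _
      _ = ℓ * ‖h‖ ^ 2 * t := by
          rw [add_sub_cancel_left, norm_smul, Real.norm_eq_abs, abs_of_nonneg ht.1]
          ring
  calc |∫ t in (0:ℝ)..1, ⟪gradient Q (x + t • h) - gradient Q x, h⟫|
      ≤ ∫ t in (0:ℝ)..1, |⟪gradient Q (x + t • h) - gradient Q x, h⟫| := by
        exact intervalIntegral.abs_integral_le_integral_abs zero_le_one
    _ ≤ ∫ t in (0:ℝ)..1, ℓ * ‖h‖ ^ 2 * t := by
        apply intervalIntegral.integral_mono_on zero_le_one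
          ((hcont2.abs).intervalIntegrable 0 1)
          ((continuous_const.mul continuous_id).intervalIntegrable 0 1)
        exact hb
    _ = ℓ / 2 * ‖h‖ ^ 2 := by
        rw [intervalIntegral.integral_const_mul, integral_id]
        ring

/-- averaging of the demodulated measurement recovers the gradient:
for Q of class C¹ with ℓ-Lipschitz gradient,
`|(1/T)·∫₀ᵀ Q(θ̂+S(t))·(2/a)·sin(ωᵢt) dt − ∂Q/∂θᵢ(θ̂)| ≤ n·ℓ·a`. -/
theorem stmt13 {n : ℕ} (hn : 1 ≤ n) (ω : Fin n → ℝ) (T : ℝ)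
    (hω : ∀ i, 0 < ω i) (hωinj : Function.Injective ω)
    (hωrat : ∀ i j, ∃ q : ℚ, ω i = (q : ℝ) * ω j)
    (hT : 0 < T) (hTper : ∀ i, ∃ m : ℕ, 0 < m ∧ ω i * T = (m : ℝ) * (2 * Real.pi))
    (Q : EuclideanSpace ℝ (Fin n) → ℝ) (ℓ : ℝ) (hℓ : 0 < ℓ)
    (hQ : ContDiff ℝ 1 Q)
    (hQlip : ∀ x y, ‖gradient Q x - gradient Q y‖ ≤ ℓ * ‖x - y‖) :
    ∀ (θhat : EuclideanSpace ℝ (Fin n)) (a : ℝ), 0 < a → ∀ i : Fin n,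
      |(1 / T) * (∫ t in (0:ℝ)..T,
          Q (θhat + dither ω a t) * ((2 / a) * Real.sin (ω i * t))) -
        gradient Q θhat i| ≤ n * ℓ * a := by
  intro θhat a ha i
  have ha' : a ≠ 0 := ne_of_gt ha
  choose M hM1 hM2 using hTper
  set g : EuclideanSpace ℝ (Fin n) := gradient Q θhat with hgdef
  -- continuity of the dither signal
  have hScont : Continuous fun t : ℝ => dither ω a t := by
    unfold dither
    exact (PiLp.continuous_toLp 2 _).comp (continuous_pi fun j =>
      continuous_const.mul (Real.continuous_sin.comp (continuous_const.mul continuous_id)))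
  -- orthogonality of the sines
  have key : ∀ j : Fin n, (∫ t in (0:ℝ)..T, Real.sin (ω j * t) * Real.sin (ω i * t))
      = if j = i then T / 2 else 0 := by
    intro j
    have hrw : ∀ t ∈ Set.uIcc (0:ℝ) T,
        (fun t => Real.sin (ω j * t) * Real.sin (ω i * t)) t
          = (Real.cos ((ω j - ω i) * t) - Real.cos ((ω j + ω i) * t)) / 2 := by
      intro t _
      simp only [sub_mul, add_mul, Real.cos_sub, Real.cos_add]
      ring
    rw [intervalIntegral.integral_congr hrw]
    have hc1 : IntervalIntegrable (fun t => Real.cos ((ω j - ω i) * t)) MeasureTheory.volume 0 T :=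
      (Real.continuous_cos.comp (continuous_const.mul continuous_id)).intervalIntegrable 0 T
    have hc2 : IntervalIntegrable (fun t => Real.cos ((ω j + ω i) * t)) MeasureTheory.volume 0 T :=
      (Real.continuous_cos.comp (continuous_const.mul continuous_id)).intervalIntegrable 0 T
    have hsum0 : ∫ t in (0:ℝ)..T, Real.cos ((ω j + ω i) * t) = 0 := by
      apply integral_cos_zero' (ne_of_gt (add_pos (hω j) (hω i))) ((M j : ℤ) + (M i : ℤ))
      push_cast
      rw [add_mul, hM2 j, hM2 i]
      ring
    simp only [intervalIntegral.integral_div]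
    rw [intervalIntegral.integral_sub hc1 hc2, hsum0]
    by_cases hji : j = i
    · subst hji
      simp only [sub_self, zero_mul, Real.cos_zero, if_pos rfl]
      rw [intervalIntegral.integral_const]
      simp
    · have hne : ω j - ω i ≠ 0 := sub_ne_zero.mpr fun hc => hji (hωinj hc)
      have hdiff0 : ∫ t in (0:ℝ)..T, Real.cos ((ω j - ω i) * t) = 0 := by
        apply integral_cos_zero' hne ((M j : ℤ) - (M i : ℤ))
        push_cast
        rw [sub_mul, hM2 j, hM2 i]
        ring
      rw [hdiff0, if_neg hji]
      simp
  -- the linear term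
  have hlin : (∫ t in (0:ℝ)..T, ⟪g, dither ω a t⟫ * ((2 / a) * Real.sin (ω i * t)))
      = g i * T := by
    have hrw : ∀ t ∈ Set.uIcc (0:ℝ) T,
        (fun t => ⟪g, dither ω a t⟫ * ((2 / a) * Real.sin (ω i * t))) t
          = ∑ j, (2 * g j) * (Real.sin (ω j * t) * Real.sin (ω i * t)) := by
      intro t _
      simp only [PiLp.inner_apply, RCLike.inner_apply, conj_trivial, dither]
      rw [Finset.sum_mul]
      apply Finset.sum_congr rfl
      intro j _
      field_simp
    rw [intervalIntegral.integral_congr hrw,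
      intervalIntegral.integral_finset_sum (fun j _ =>
        (Continuous.intervalIntegrable (by fun_prop) 0 T))]
    have : ∀ j : Fin n, (∫ t in (0:ℝ)..T, (2 * g j) * (Real.sin (ω j * t) * Real.sin (ω i * t)))
        = if j = i then g i * T else 0 := by
      intro j
      rw [intervalIntegral.integral_const_mul, key j]
      by_cases hji : j = i
      · subst hji; rw [if_pos rfl, if_pos rfl]; ring
      · rw [if_neg hji, if_neg hji, mul_zero]
    rw [Finset.sum_congr rfl (fun j _ => this j)]
    simp
  -- the constant term
  have hconst : (∫ t in (0:ℝ)..T, Q θhat * ((2 / a) * Real.sin (ω i * t))) = 0 := by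
    have hs0 : ∫ t in (0:ℝ)..T, Real.sin (ω i * t) = 0 :=
      integral_sin_zero' (ne_of_gt (hω i)) (M i) (by exact_mod_cast hM2 i)
    have hrw : ∀ t ∈ Set.uIcc (0:ℝ) T,
        (fun t => Q θhat * ((2 / a) * Real.sin (ω i * t))) t
          = (Q θhat * (2 / a)) * Real.sin (ω i * t) := fun t _ => by ring
    rw [intervalIntegral.integral_congr hrw, intervalIntegral.integral_const_mul, hs0, mul_zero]
  -- the remainder term
  set R : ℝ → ℝ := fun t => Q (θhat + dither ω a t) - Q θhat - ⟪g, dither ω a t⟫ with hRdef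
  have hRcont : Continuous R :=
    ((hQ.continuous.comp (continuous_const.add hScont)).sub continuous_const).sub
      (Continuous.inner continuous_const hScont)
  have hnormS : ∀ t, ‖dither ω a t‖ ^ 2 ≤ n * a ^ 2 := by
    intro t
    have h1 : ‖dither ω a t‖ ^ 2 = ∑ j, (a * Real.sin (ω j * t)) ^ 2 := by
      rw [EuclideanSpace.norm_eq, Real.sq_sqrt (by positivity)]
      simp [dither, Real.norm_eq_abs, mul_pow, sq_abs]
    rw [h1]
    calc ∑ j, (a * Real.sin (ω j * t)) ^ 2 ≤ ∑ _j : Fin n, a ^ 2 := by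
          apply Finset.sum_le_sum
          intro j _
          rw [mul_pow]
          calc a ^ 2 * Real.sin (ω j * t) ^ 2 ≤ a ^ 2 * 1 :=
                mul_le_mul_of_nonneg_left (Real.sin_sq_le_one _) (sq_nonneg a)
            _ = a ^ 2 := mul_one _
      _ = n * a ^ 2 := by simp [Finset.sum_const, Finset.card_univ, mul_comm]
  have hRb : ∀ t, |R t| ≤ ℓ / 2 * (n * a ^ 2) := by
    intro t
    calc |R t| ≤ ℓ / 2 * ‖dither ω a t‖ ^ 2 := taylor_bound' Q ℓ hQ hQlip θhat (dither ω a t)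
      _ ≤ ℓ / 2 * (n * a ^ 2) := by gcongr; exact hnormS t
  have hRm : ∀ t ∈ Set.uIoc (0:ℝ) T,
      ‖R t * ((2 / a) * Real.sin (ω i * t))‖ ≤ n * ℓ * a := by
    intro t _
    rw [Real.norm_eq_abs, abs_mul]
    calc |R t| * |2 / a * Real.sin (ω i * t)|
        ≤ (ℓ / 2 * (n * a ^ 2)) * (2 / a * 1) := by
          have h2 : |2 / a * Real.sin (ω i * t)| ≤ 2 / a * 1 := by
            rw [abs_mul, abs_of_pos (by positivity : (0:ℝ) < 2 / a)]
            exact mul_le_mul_of_nonneg_left (Real.abs_sin_le_one _) (by positivity)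
          exact mul_le_mul (hRb t) h2 (abs_nonneg _) (by positivity)
      _ = n * ℓ * a := by field_simp
  have hRint : ‖∫ t in (0:ℝ)..T, R t * ((2 / a) * Real.sin (ω i * t))‖ ≤ n * ℓ * a * |T - 0| :=
    intervalIntegral.norm_integral_le_of_norm_le_const hRm
  -- decomposition of the integrand
  have hdecomp : ∀ t ∈ Set.uIcc (0:ℝ) T,
      (fun t => Q (θhat + dither ω a t) * ((2 / a) * Real.sin (ω i * t))) t
        = Q θhat * ((2 / a) * Real.sin (ω i * t))
          + ⟪g, dither ω a t⟫ * ((2 / a) * Real.sin (ω i * t))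
          + R t * ((2 / a) * Real.sin (ω i * t)) := by
    intro t _
    simp only [hRdef]
    ring
  have int1 : IntervalIntegrable (fun t => Q θhat * ((2 / a) * Real.sin (ω i * t)))
      MeasureTheory.volume 0 T := Continuous.intervalIntegrable (by fun_prop) 0 T
  have int2 : IntervalIntegrable (fun t => ⟪g, dither ω a t⟫ * ((2 / a) * Real.sin (ω i * t)))
      MeasureTheory.volume 0 T :=
    Continuous.intervalIntegrable
      ((Continuous.inner continuous_const hScont).mul (by fun_prop)) 0 T
  have int3 : IntervalIntegrable (fun t => R t * ((2 / a) * Real.sin (ω i * t)))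
      MeasureTheory.volume 0 T :=
    Continuous.intervalIntegrable (hRcont.mul (by fun_prop)) 0 T
  have htot : (∫ t in (0:ℝ)..T, Q (θhat + dither ω a t) * ((2 / a) * Real.sin (ω i * t)))
      = g i * T + ∫ t in (0:ℝ)..T, R t * ((2 / a) * Real.sin (ω i * t)) := by
    rw [intervalIntegral.integral_congr hdecomp,
      intervalIntegral.integral_add (int1.add int2) int3,
      intervalIntegral.integral_add int1 int2, hconst, hlin]
    ring
  rw [htot]
  have hTne : T ≠ 0 := ne_of_gt hT
  have heq : (1 / T) * (g i * T + ∫ t in (0:ℝ)..T, R t * ((2 / a) * Real.sin (ω i * t))) - g i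
      = (1 / T) * ∫ t in (0:ℝ)..T, R t * ((2 / a) * Real.sin (ω i * t)) := by
    have hTg : (1 / T) * (g i * T) = g i := by field_simp
    rw [mul_add, hTg]
    ring
  rw [heq, abs_mul, abs_of_pos (by positivity : (0:ℝ) < 1 / T)]
  have := hRint
  rw [Real.norm_eq_abs, sub_zero, abs_of_pos hT] at this
  calc (1 / T) * |∫ t in (0:ℝ)..T, R t * ((2 / a) * Real.sin (ω i * t))|
      ≤ (1 / T) * (n * ℓ * a * T) := by gcongr
    _ = n * ℓ * a := by field_simp
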